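/- (Elezović summation formula) For every integer k ≥ 1, B_k / k! = Σ_{n=1}^{k} (−1)^{n+k} Σ_{k_1+⋯+k_n = k, k_i ≥ 1} (1/n!) · (B_{k_1}/(k_1·k_1!)) ⋯ (B_{k_n}/(k_n·k_n!)). -/

import Mathlib

open Finset PowerSeries

namespace Elez

/-- a composition with a prepended first block -/
def consComp (i : ℕ) (hi : i ≠ 0) {j k : ℕ} (hk : i + j = k) (c : Composition j) :
    Composition k :=
  ⟨i :: c.blocks, by
      intro x hx
      rcases List.mem_cons.mp hx with rfl | hx
      · exact Nat.pos_of_ne_zero hi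
      · exact c.blocks_pos hx,
    by simp [c.blocks_sum, hk]⟩

lemma comp_zero_blocks (c : Composition 0) : c.blocks = [] := by
  cases hb : c.blocks with
  | nil => rfl
  | cons a l =>
    exfalso
    have h1 : 0 < a := c.blocks_pos (by rw [hb]; exact List.mem_cons_self)
    have h2 := c.blocks_sum
    rw [hb] at h2
    simp only [List.sum_cons] at h2
    omega

lemma coeff_pow_eq_sum_composition (f : ℕ → ℚ) (hf : f 0 = 0) (n k : ℕ) :
    (PowerSeries.coeff k) ((PowerSeries.mk f) ^ n)
      = ∑ c : Composition k, if c.length = n then (c.blocks.map f).prod else 0 := by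
  induction n generalizing k with
  | zero =>
    rw [pow_zero, PowerSeries.coeff_one]
    rcases Nat.eq_zero_or_pos k with rfl | hk
    · rw [if_pos rfl]
      have : ∀ c : Composition 0,
          (if c.length = 0 then ((c.blocks.map f).prod : ℚ) else 0) = 1 := by
        intro c
        have hb := comp_zero_blocks c
        simp [Composition.length, hb]
      rw [Finset.sum_congr rfl (fun c _ => this c), Finset.sum_const]
      rw [Finset.card_univ, composition_card]
      simp
    · rw [if_neg (by omega)]
      refine (Finset.sum_eq_zero fun c _ => ?_).symm
      have := c.length_pos_of_pos hk
      rw [if_neg (by omega)]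
  | succ n ih =>
    rw [pow_succ', PowerSeries.coeff_mul]
    simp only [coeff_mk, ih]
    simp_rw [Finset.mul_sum]
    rw [Finset.sum_sigma' (Finset.HasAntidiagonal.antidiagonal k) (fun _ => Finset.univ)]
    refine Finset.sum_bij_ne_zero
      (fun a h₁ h₂ => consComp a.1.1
        (fun h0 => h₂ (by rw [h0, hf, zero_mul]))
        (Finset.HasAntidiagonal.mem_antidiagonal.mp (Finset.mem_sigma.mp h₁).1) a.2)
      (fun a h₁ h₂ => Finset.mem_univ _) ?_ ?_ ?_
    · rintro ⟨⟨i₁, j₁⟩, c₁⟩ h₁₁ h₁₂ ⟨⟨i₂, j₂⟩, c₂⟩ h₂₁ h₂₂ heq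
      have hb := congrArg Composition.blocks heq
      simp only [consComp] at hb
      have hi : i₁ = i₂ := (List.cons.injEq _ _ _ _ ▸ hb).1
      have hm₁ : i₁ + j₁ = k := by
        simpa using Finset.HasAntidiagonal.mem_antidiagonal.mp (Finset.mem_sigma.mp h₁₁).1
      have hm₂ : i₂ + j₂ = k := by
        simpa using Finset.HasAntidiagonal.mem_antidiagonal.mp (Finset.mem_sigma.mp h₂₁).1
      have hj : j₁ = j₂ := by omega
      subst hi hj
      have hc : c₁ = c₂ := Composition.ext ((List.cons.injEq _ _ _ _ ▸ hb).2)
      rw [hc]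
    · intro c _ hc
      have hlen : c.length = n + 1 := by
        by_contra hne
        exact hc (if_neg hne)
      have hne : c.blocks ≠ [] := by
        intro h
        rw [← Composition.blocks_length, h] at hlen
        simp at hlen
      obtain ⟨b₀, l, hbl⟩ := List.exists_cons_of_ne_nil hne
      have hb₀ : b₀ ≠ 0 := by
        have : 0 < b₀ := c.blocks_pos (by rw [hbl]; exact List.mem_cons_self)
        omega
      have hlpos : ∀ i ∈ l, 0 < i := fun i hi =>
        c.blocks_pos (by rw [hbl]; exact List.mem_cons_of_mem _ hi)
      have hsum : b₀ + l.sum = k := by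
        have := c.blocks_sum
        rw [hbl, List.sum_cons] at this
        exact this
      refine ⟨⟨⟨b₀, l.sum⟩, ⟨l, fun hi => hlpos _ hi, rfl⟩⟩, Finset.mem_sigma.mpr ⟨Finset.HasAntidiagonal.mem_antidiagonal.mpr hsum, Finset.mem_univ _⟩, ?_, ?_⟩
      · -- the value is nonzero
        have hlen' : (⟨l, fun hi => hlpos _ hi, rfl⟩ : Composition l.sum).length = n := by
          have h3 : c.blocks.length = n + 1 := by rw [Composition.blocks_length, hlen]
          rw [hbl, List.length_cons] at h3
          simp only [Composition.length]
          omega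
        rw [if_pos hlen']
        intro h0
        apply hc
        rw [if_pos hlen, hbl]
        simpa [List.prod_cons] using h0
      · -- maps to c
        apply Composition.ext
        simp [consComp, hbl]
    · rintro ⟨⟨i, j⟩, c⟩ h₁ h₂
      have hlen : c.length = n := by
        by_contra hne
        rw [if_neg hne, mul_zero] at h₂
        exact h₂ rfl
      simp only [if_pos hlen]
      simp [consComp, Composition.length, Composition.blocks_length, hlen]

end Elez

namespace Elez2
open Elez

noncomputable def b (j : ℕ) : ℚ := bernoulli j / (j * j.factorial)

noncomputable def h (j : ℕ) : ℚ := if j = 0 then 0 else - b j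

lemma h_zero : h 0 = 0 := rfl

noncomputable def H : ℚ⟦X⟧ := PowerSeries.mk h

noncomputable def B : ℚ⟦X⟧ := bernoulliPowerSeries ℚ

lemma coeff_B (n : ℕ) : PowerSeries.coeff n B = bernoulli n / n.factorial := by
  simp [B, bernoulliPowerSeries]

lemma coeff_H_pow (n k : ℕ) :
    (PowerSeries.coeff k) (H ^ n)
      = ∑ c : Composition k, if c.length = n then (c.blocks.map h).prod else 0 :=
  coeff_pow_eq_sum_composition h h_zero n k

lemma coeff_H_pow_eq_zero {n k : ℕ} (hk : k < n) :
    (PowerSeries.coeff k) (H ^ n) = 0 := by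
  rw [coeff_H_pow]
  refine Finset.sum_eq_zero fun c _ => ?_
  rw [if_neg]
  have := c.length_le
  omega

noncomputable def E : ℚ⟦X⟧ :=
  PowerSeries.mk fun k => ∑ n ∈ Finset.range (k + 1),
    ((n.factorial : ℚ)⁻¹) * (PowerSeries.coeff k) (H ^ n)

lemma coeff_E (k : ℕ) : PowerSeries.coeff k E
    = ∑ n ∈ Finset.range (k + 1), ((n.factorial : ℚ)⁻¹) * (PowerSeries.coeff k) (H ^ n) :=
  coeff_mk _ _

lemma coeff_E' {k m : ℕ} (hk : k < m) : PowerSeries.coeff k E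
    = ∑ n ∈ Finset.range m, ((n.factorial : ℚ)⁻¹) * (PowerSeries.coeff k) (H ^ n) := by
  rw [coeff_E]
  refine Finset.sum_subset (Finset.range_subset_range.mpr hk) fun n _ hn => ?_
  rw [coeff_H_pow_eq_zero (by simp at hn ⊢; omega), mul_zero]

lemma deriv_exp : d⁄dX ℚ (PowerSeries.exp ℚ) = PowerSeries.exp ℚ := by
  ext n
  rw [PowerSeries.coeff_derivative, PowerSeries.coeff_exp, PowerSeries.coeff_exp]
  have h1 : ((n.factorial : ℚ)) ≠ 0 := by exact_mod_cast n.factorial_ne_zero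
  have h2 : (((n+1).factorial : ℚ)) ≠ 0 := by exact_mod_cast (n+1).factorial_ne_zero
  simp only [map_div₀, map_one, Algebra.algebraMap_self, RingHom.id_apply]
  rw [Nat.factorial_succ]
  push_cast
  field_simp

lemma deriv_B : X * d⁄dX ℚ B = B - X * B - B ^ 2 := by
  have h2 : B * (PowerSeries.exp ℚ - 1) = X := bernoulliPowerSeries_mul_exp_sub_one ℚ
  have h1 : d⁄dX ℚ B * (PowerSeries.exp ℚ - 1) + B * PowerSeries.exp ℚ = 1 := by
    have h3 := congrArg (d⁄dX ℚ) h2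
    rw [Derivation.leibniz, PowerSeries.derivative_X, map_sub, deriv_exp,
      Derivation.map_one_eq_zero] at h3
    simp only [smul_eq_mul, sub_zero] at h3
    linear_combination h3
  linear_combination B * h1 - (d⁄dX ℚ B + B) * h2

lemma X_mul_deriv_H : X * d⁄dX ℚ H = 1 - B := by
  ext j
  cases j with
  | zero =>
    simp [B, bernoulliPowerSeries, bernoulli_zero]
  | succ j =>
    rw [PowerSeries.coeff_succ_X_mul, PowerSeries.coeff_derivative]
    rw [map_sub, coeff_B, PowerSeries.coeff_one, if_neg (Nat.succ_ne_zero j)]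
    simp only [H, coeff_mk]
    rw [h, if_neg (Nat.succ_ne_zero j), b]
    have h1 : ((j : ℚ) + 1) ≠ 0 := by positivity
    have h2 : (((j+1).factorial : ℚ)) ≠ 0 := by exact_mod_cast (j+1).factorial_ne_zero
    push_cast
    field_simp
    ring

lemma deriv_E : d⁄dX ℚ E = d⁄dX ℚ H * E := by
  ext k
  rw [PowerSeries.coeff_derivative, coeff_E]
  have lhs_eq : (∑ n ∈ Finset.range (k + 1 + 1),
      ((n.factorial : ℚ)⁻¹) * (PowerSeries.coeff (k+1)) (H ^ n)) * ((k : ℚ) + 1)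
      = ∑ m ∈ Finset.range (k + 1),
        ((m.factorial : ℚ)⁻¹) * (PowerSeries.coeff k) (d⁄dX ℚ H * H ^ m) := by
    rw [Finset.sum_mul, Finset.sum_range_succ']
    have hz : ((Nat.factorial 0 : ℚ)⁻¹) * (PowerSeries.coeff (k+1)) (H ^ 0) * ((k:ℚ)+1) = 0 := by
      simp [PowerSeries.coeff_one]
    rw [hz, add_zero]
    refine Finset.sum_congr rfl fun m _ => ?_
    have hder : (((m+1:ℕ)) : ℚ) * (PowerSeries.coeff k) (H ^ m * d⁄dX ℚ H)
        = (PowerSeries.coeff (k+1)) (H ^ (m+1)) * ((k:ℚ)+1) := by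
      have h5 := PowerSeries.coeff_derivative (H ^ (m+1)) k
      rw [Derivation.leibniz_pow, Nat.add_sub_cancel, smul_eq_mul, map_nsmul,
        nsmul_eq_mul] at h5
      exact_mod_cast h5
    have hfac : (((m+1).factorial : ℚ)) = ((m+1 : ℕ) : ℚ) * (m.factorial : ℚ) := by
      rw [Nat.factorial_succ]; push_cast; ring
    have hne : ((m+1 : ℕ) : ℚ) ≠ 0 := by push_cast; positivity
    have hne2 : ((m.factorial : ℚ)) ≠ 0 := by exact_mod_cast m.factorial_ne_zero
    rw [mul_comm (d⁄dX ℚ H) (H ^ m), mul_assoc, ← hder, hfac]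
    field_simp
  rw [lhs_eq]
  have rhs_eq : (PowerSeries.coeff k) (d⁄dX ℚ H * E)
      = ∑ m ∈ Finset.range (k+1),
        ((m.factorial : ℚ)⁻¹) * (PowerSeries.coeff k) (d⁄dX ℚ H * H ^ m) := by
    rw [PowerSeries.coeff_mul]
    have step : ∀ p ∈ Finset.HasAntidiagonal.antidiagonal k,
        (PowerSeries.coeff p.1) (d⁄dX ℚ H) * (PowerSeries.coeff p.2) E
        = ∑ m ∈ Finset.range (k+1), ((m.factorial : ℚ)⁻¹) *
            ((PowerSeries.coeff p.1) (d⁄dX ℚ H) * (PowerSeries.coeff p.2) (H ^ m)) := by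
      intro p hp
      have hp2 : p.2 < k + 1 := by
        have := Finset.HasAntidiagonal.mem_antidiagonal.mp hp
        omega
      rw [coeff_E' hp2, Finset.mul_sum]
      exact Finset.sum_congr rfl fun m _ => by ring
    rw [Finset.sum_congr rfl step, Finset.sum_comm]
    refine Finset.sum_congr rfl fun m _ => ?_
    rw [PowerSeries.coeff_mul, Finset.mul_sum]
  rw [rhs_eq]

lemma deriv_P : d⁄dX ℚ (X + B) = d⁄dX ℚ H * (X + B) := by
  have hX : (X : ℚ⟦X⟧) ≠ 0 := PowerSeries.X_ne_zero
  apply mul_left_cancel₀ hX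
  have hd : d⁄dX ℚ (X + B) = 1 + d⁄dX ℚ B := by
    rw [map_add, PowerSeries.derivative_X]
  rw [hd]
  linear_combination deriv_B - (X + B) * X_mul_deriv_H

lemma ODE_unique {u p q : ℚ⟦X⟧} (hp : d⁄dX ℚ p = u * p) (hq : d⁄dX ℚ q = u * q)
    (h0 : PowerSeries.coeff 0 p = PowerSeries.coeff 0 q) : p = q := by
  ext k
  induction k using Nat.strong_induction_on with
  | _ k ih =>
    match k with
    | 0 => exact h0
    | (k+1) =>
      have hpk := PowerSeries.coeff_derivative p k
      have hqk := PowerSeries.coeff_derivative q k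
      rw [hp] at hpk
      rw [hq] at hqk
      have hk1 : ((k:ℚ)+1) ≠ 0 := by positivity
      have hmain : PowerSeries.coeff (k+1) p * ((k:ℚ)+1)
          = PowerSeries.coeff (k+1) q * ((k:ℚ)+1) := by
        rw [← hpk, ← hqk, PowerSeries.coeff_mul, PowerSeries.coeff_mul]
        refine Finset.sum_congr rfl fun x hx => ?_
        have hx2 : x.2 < k + 1 := by
          have := Finset.HasAntidiagonal.mem_antidiagonal.mp hx
          omega
        rw [ih x.2 hx2]
      exact mul_right_cancel₀ hk1 hmain

lemma E_eq : E = X + B := by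
  refine ODE_unique deriv_E deriv_P ?_
  rw [coeff_E]
  have : PowerSeries.coeff 0 (X + B) = 1 := by
    rw [map_add, PowerSeries.coeff_zero_X, coeff_B]
    norm_num
  rw [this]
  simp [PowerSeries.coeff_one]

lemma map_h_prod (l : List ℕ) (hl : ∀ i ∈ l, 0 < i) :
    (l.map h).prod = (-1 : ℚ)^l.length * (l.map b).prod := by
  induction l with
  | nil => simp
  | cons a t ih =>
    have ha : a ≠ 0 := by
      have := hl a (List.mem_cons_self)
      omega
    rw [List.map_cons, List.map_cons, List.prod_cons, List.prod_cons, List.length_cons,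
      ih (fun i hi => hl i (List.mem_cons_of_mem _ hi)), h, if_neg ha]
    ring

end Elez2

/-- Elezović summation formula: for every k ≥ 1,
B_k/k! = Σ_{n=1}^{k} (−1)^{n+k} Σ_{k₁+⋯+kₙ=k, kᵢ≥1} (1/n!) ∏ B_{kᵢ}/(kᵢ·kᵢ!).
The double sum is expressed as a single sum over all compositions of k,
with n = the length of the composition. -/
theorem stmt9 (k : ℕ) (hk : 1 ≤ k) :
    bernoulli k / (k.factorial : ℚ)
      = ∑ c : Composition k,
          (-1 : ℚ) ^ (c.length + k) * (1 / (c.length.factorial : ℚ)) *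
            (c.blocks.map (fun j : ℕ => bernoulli j / ((j : ℚ) * (j.factorial : ℚ)))).prod := by
  have hterm : ∀ c : Composition k,
      (-1 : ℚ) ^ (c.length + k) * (1 / (c.length.factorial : ℚ)) *
        (c.blocks.map (fun j : ℕ => bernoulli j / ((j : ℚ) * (j.factorial : ℚ)))).prod
      = (-1:ℚ)^k * (((c.length.factorial : ℚ))⁻¹ * (c.blocks.map Elez2.h).prod) := by
    intro c
    have hbfun : (fun j : ℕ => bernoulli j / ((j : ℚ) * (j.factorial : ℚ))) = Elez2.b := by
      funext j
      rw [Elez2.b]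
    rw [hbfun, Elez2.map_h_prod c.blocks (fun i hi => c.blocks_pos hi),
      Composition.blocks_length, pow_add]
    rw [one_div]
    ring
  rw [Finset.sum_congr rfl (fun c _ => hterm c), ← Finset.mul_sum]
  have hsum : (∑ c : Composition k,
        ((c.length.factorial : ℚ)⁻¹ * (c.blocks.map Elez2.h).prod))
      = PowerSeries.coeff k Elez2.E := by
    rw [Elez2.coeff_E]
    have expand : ∀ c : Composition k,
        ((c.length.factorial : ℚ)⁻¹ * (c.blocks.map Elez2.h).prod)
        = ∑ n ∈ Finset.range (k+1),
            (if c.length = n then ((n.factorial : ℚ)⁻¹ * (c.blocks.map Elez2.h).prod) else 0) := by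
      intro c
      rw [Finset.sum_ite_eq (Finset.range (k+1)) c.length
        (fun n => ((n.factorial : ℚ)⁻¹ * (c.blocks.map Elez2.h).prod)),
        if_pos (Finset.mem_range.mpr (by have := c.length_le; omega))]
    rw [Finset.sum_congr rfl fun c _ => expand c, Finset.sum_comm]
    refine Finset.sum_congr rfl fun n _ => ?_
    rw [Elez2.coeff_H_pow, Finset.mul_sum]
    refine Finset.sum_congr rfl fun c _ => ?_
    split_ifs with h1 <;> simp
  rw [hsum, Elez2.E_eq, map_add, PowerSeries.coeff_X, Elez2.coeff_B]
  rcases Nat.even_or_odd k with he | ho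
  · rw [he.neg_one_pow, if_neg (by rintro rfl; exact (Nat.not_even_one he)), one_mul, zero_add]
  · rcases eq_or_ne k 1 with rfl | hne
    · norm_num [bernoulli_one]
    · have hb0 : bernoulli k = 0 := by
        rw [bernoulli_eq_bernoulli'_of_ne_one hne, bernoulli'_eq_zero_of_odd ho (by omega)]
      rw [hb0, if_neg hne]
      norm_num
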